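/- If w' is a Baxter permutation of length n+2 (n ≥ 0) fixed under half-turn (180°) rotation of its permutation matrix, then the permutation w of length n obtained from w' by deleting the entries with values n+2 and 1 and subtracting 1 from each remaining entry is a Baxter permutation fixed under half-turn rotation. -/

import Mathlib

/-- The entry of the word `l` at (1-indexed) position `i`, i.e. `w(i)`. -/
def entry (l : List ℕ) (i : ℕ) : ℕ := l.getD (i - 1) 0

/-- `l` is the one-line notation of a permutation of `{1,…,n}`. -/
def IsPermWord (n : ℕ) (l : List ℕ) : Prop := l.Perm (List.range' 1 n)

/-- `l` is a Baxter permutation of length `n`: a permutation of `{1,…,n}`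
avoiding the vincular patterns 3-14-2 and 2-41-3. -/
def IsBaxter (n : ℕ) (l : List ℕ) : Prop :=
  IsPermWord n l ∧
  (¬ ∃ i j k, 1 ≤ i ∧ i < j ∧ j + 1 < k ∧ k ≤ n ∧
      entry l j < entry l k ∧ entry l k < entry l i ∧ entry l i < entry l (j + 1)) ∧
  (¬ ∃ i j k, 1 ≤ i ∧ i < j ∧ j + 1 < k ∧ k ≤ n ∧
      entry l (j + 1) < entry l i ∧ entry l i < entry l k ∧ entry l k < entry l j)

/-- `l` is fixed under quarter-turn (90°) rotation of its permutation matrix: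
`w(w(i)) = n+1-i` for all `i ∈ {1,…,n}`. -/
def QuarterFixed (n : ℕ) (l : List ℕ) : Prop :=
  ∀ i, 1 ≤ i → i ≤ n → entry l (entry l i) = n + 1 - i

/-- `l` is fixed under half-turn (180°) rotation of its permutation matrix:
`w(n+1-i) = n+1-w(i)` for all `i ∈ {1,…,n}`. -/
def HalfFixed (n : ℕ) (l : List ℕ) : Prop :=
  ∀ i, 1 ≤ i → i ≤ n → entry l (n + 1 - i) = n + 1 - entry l i

/-- The entry at position `i` is a left-to-right maximum. -/
def LRMaxAt (l : List ℕ) (i : ℕ) : Prop := ∀ k, 1 ≤ k → k < i → entry l k < entry l i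

/-- The entry at position `i` is a right-to-left maximum. -/
def RLMaxAt (n : ℕ) (l : List ℕ) (i : ℕ) : Prop := ∀ k, i < k → k ≤ n → entry l k < entry l i

/-- The entry at position `i` is a left-to-right minimum. -/
def LRMinAt (l : List ℕ) (i : ℕ) : Prop := ∀ k, 1 ≤ k → k < i → entry l i < entry l k

/-- The entry at position `i` is a right-to-left minimum. -/
def RLMinAt (n : ℕ) (l : List ℕ) (i : ℕ) : Prop := ∀ k, i < k → k ≤ n → entry l i < entry l k

/-- The (1-indexed) position of the value `v` in `l`, i.e. `w⁻¹(v)`. -/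
def pos (l : List ℕ) (v : ℕ) : ℕ := l.idxOf v + 1

/-- The one-line notation of the inverse of the permutation `l` of `{1,…,n}`. -/
def invWord (n : ℕ) (l : List ℕ) : List ℕ := (List.range' 1 n).map (pos l)

/-- The number of descents of a permutation word of length `n`:
indices `i ∈ {1,…,n-1}` with `w(i) > w(i+1)`. -/
noncomputable def des (n : ℕ) (l : List ℕ) : ℕ :=
  {i : ℕ | 1 ≤ i ∧ i + 1 ≤ n ∧ entry l (i + 1) < entry l i}.ncard

/-- Insert a new largest label `n+1` at (1-indexed) position `p`
in the permutation `l` of `{1,…,n}`. -/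
def insertMax (n p : ℕ) (l : List ℕ) : List ℕ := l.insertIdx (p - 1) (n + 1)

/-- Insert a new smallest label `1` at (1-indexed) position `p`
(all old labels get increased by 1). -/
def insertMin (p : ℕ) (l : List ℕ) : List ℕ := (l.map (· + 1)).insertIdx (p - 1) 1

/-- Append the value `j` at the end of the permutation `l`
(old labels `≥ j` get increased by 1). -/
def appendEnd (j : ℕ) (l : List ℕ) : List ℕ :=
  (l.map (fun x => if x < j then x else x + 1)) ++ [j]

/-- Standardize a word with distinct entries: replace the entries by `1,…,m` preserving
relative order (each entry is replaced by the number of entries less than or equal to it). -/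
def standardize (l : List ℕ) : List ℕ := l.map (fun x => (l.filter (fun y => y ≤ x)).length)

private def gfun (s t : ℕ) : ℕ → ℕ := fun i =>
  if i < s then i else if i + 1 < t then i + 1 else i + 2

private lemma gfun_mono {s t i j : ℕ} (h : i < j) : gfun s t i < gfun s t j := by
  simp only [gfun]; split_ifs <;> omega

private lemma gfun_lt {n s t : ℕ} (ht : t ≤ n + 1) {i : ℕ} (hi : i < n) :
    gfun s t i < n + 2 := by
  simp only [gfun]; split_ifs <;> omega

private lemma gfun_ne {s t : ℕ} (hst : s < t) (i : ℕ) :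
    gfun s t i ≠ s ∧ gfun s t i ≠ t := by
  simp only [gfun]; split_ifs <;> omega

private lemma gfun_sym {n s t : ℕ} (hst : s < t) (hsum : s + t = n + 1) {i : ℕ}
    (hi : i < n) : gfun s t (n - 1 - i) = n + 1 - gfun s t i := by
  simp only [gfun]; split_ifs <;> omega

private lemma gfun_gap {s t : ℕ} (hst : s < t) {x r : ℕ} (h1 : gfun s t x < r)
    (h2 : r < gfun s t (x + 1)) : r = s ∨ r = t := by
  simp only [gfun] at h1 h2; split_ifs at h1 h2 <;> omega

private lemma gfun_step {s t : ℕ} (x : ℕ) : gfun s t (x + 1) ≤ gfun s t x + 3 := by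
  simp only [gfun]; split_ifs <;> omega

private lemma erase_eq_eraseIdx_nodup {C : List ℕ} {a : ℕ} {j : ℕ} (hC : C.Nodup)
    (hj : j < C.length) (h : C[j] = a) : C.erase a = C.eraseIdx j := by
  have hm : a ∈ C := h ▸ List.getElem_mem hj
  have hlt : List.idxOf a C < C.length := List.idxOf_lt_length_iff.mpr hm
  have he : C[List.idxOf a C]'hlt = C[j]'hj := by rw [List.getElem_idxOf, h]
  have hij : List.idxOf a C = j := hC.getElem_inj_iff.mp he
  exact List.erase_eq_eraseIdx_of_idxOf hij

set_option maxHeartbeats 2000000 in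
/-- Deleting the entries with values `n+2` and `1` from a Baxter permutation of
length `n+2` fixed under half-turn rotation, and subtracting `1` from each remaining entry,
yields a Baxter permutation of length `n` fixed under half-turn rotation. -/
theorem halfFixed_baxter_core (n : ℕ) (l' : List ℕ)
    (hb : IsBaxter (n + 2) l') (hf : HalfFixed (n + 2) l') :
    IsBaxter n (((l'.erase (n + 2)).erase 1).map (· - 1)) ∧
      HalfFixed n (((l'.erase (n + 2)).erase 1).map (· - 1)) := by
  obtain ⟨hperm, hpat1, hpat2⟩ := hb
  have hlen : l'.length = n + 2 := by simpa using hperm.length_eq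
  have hnd : l'.Nodup := hperm.nodup_iff.mpr (List.nodup_range' (s := 1) (n := n + 2))
  have hmem : ∀ x, x ∈ l' ↔ 1 ≤ x ∧ x ≤ n + 2 := by
    intro x; rw [hperm.mem_iff, List.mem_range'_1]; omega
  have hEb : ∀ i, i < n + 2 → 1 ≤ l'.getD i 0 ∧ l'.getD i 0 ≤ n + 2 := by
    intro i hi
    rw [List.getD_eq_getElem _ _ (by omega)]
    exact (hmem _).mp (List.getElem_mem _)
  have hEinj : ∀ i j, i < n + 2 → j < n + 2 → l'.getD i 0 = l'.getD j 0 → i = j := by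
    intro i j hi hj h
    rw [List.getD_eq_getElem l' 0 (show i < l'.length by omega),
      List.getD_eq_getElem l' 0 (show j < l'.length by omega)] at h
    exact hnd.getElem_inj_iff.mp h
  -- positions of n+2 and 1
  have hpmem : (n + 2) ∈ l' := (hmem _).mpr ⟨by omega, le_refl _⟩
  have hqmem : (1 : ℕ) ∈ l' := (hmem _).mpr ⟨le_refl _, by omega⟩
  set p := l'.idxOf (n + 2) with hpdef
  set q := l'.idxOf 1 with hqdef
  have hp_lt : p < n + 2 := by
    have := List.idxOf_lt_length_iff.mpr hpmem; omega
  have hq_lt : q < n + 2 := by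
    have := List.idxOf_lt_length_iff.mpr hqmem; omega
  have hEp : l'.getD p 0 = n + 2 := by
    rw [List.getD_eq_getElem _ _ (by omega)]; exact List.getElem_idxOf (by omega)
  have hEq : l'.getD q 0 = 1 := by
    rw [List.getD_eq_getElem _ _ (by omega)]; exact List.getElem_idxOf (by omega)
  have hf' : ∀ i, i < n + 2 → l'.getD (n + 1 - i) 0 = n + 3 - l'.getD i 0 := by
    intro i hi
    have h := hf (i + 1) (by omega) (by omega)
    simp only [entry] at h
    have e1 : n + 2 + 1 - (i + 1) - 1 = n + 1 - i := by omega
    have e2 : i + 1 - 1 = i := by omega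
    rw [e1, e2] at h
    exact h
  have hpq : q = n + 1 - p := by
    have h1 : l'.getD (n + 1 - p) 0 = n + 3 - l'.getD p 0 := hf' p hp_lt
    rw [hEp] at h1
    have h2 : l'.getD (n + 1 - p) 0 = l'.getD q 0 := by omega
    exact (hEinj _ _ (by omega) hq_lt h2).symm
  have hne : p ≠ q := by
    intro h; rw [h, hEq] at hEp; omega
  set s := min p q with hsdef
  set t := max p q with htdef
  have hst : s < t := by omega
  have hsum : s + t = n + 1 := by omega
  have ht1 : t ≤ n + 1 := by omega
  have hspq : (s = p ∧ t = q) ∨ (s = q ∧ t = p) := by omega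
  have e1 : l'.erase (n + 2) = l'.eraseIdx p :=
    erase_eq_eraseIdx_nodup hnd (by omega) (by
      rw [← List.getD_eq_getElem l' 0 (show p < l'.length by omega)]; exact hEp)
  have hClen : (l'.eraseIdx p).length = n + 1 := by
    rw [List.length_eraseIdx, hlen, if_pos hp_lt]
    omega
  set q' := if q < p then q else q - 1 with hq'def
  have hq'spec : (q < p ∧ q' = q) ∨ (p < q ∧ q' + 1 = q) := by
    rw [hq'def]; split_ifs <;> omega
  have hq'lt : q' < n + 1 := by omega
  have hq2 : q < l'.length := by omega
  have hCq'opt : (l'.eraseIdx p)[q']? = some 1 := by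
    rw [List.getElem?_eraseIdx]
    rcases hq'spec with ⟨h, h'⟩ | ⟨h, h'⟩
    · rw [if_pos (by omega : q' < p), h', List.getElem?_eq_getElem hq2,
        ← List.getD_eq_getElem l' 0 hq2, hEq]
    · rw [if_neg (by omega : ¬ q' < p), h', List.getElem?_eq_getElem hq2,
        ← List.getD_eq_getElem l' 0 hq2, hEq]
  have hCq' : (l'.eraseIdx p)[q']'(by omega) = 1 := by
    have h3 := List.getElem?_eq_getElem (show q' < (l'.eraseIdx p).length by omega)
    rw [h3] at hCq'opt
    exact Option.some.inj hCq'opt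
  have e2 : (l'.eraseIdx p).erase 1 = (l'.eraseIdx p).eraseIdx q' :=
    erase_eq_eraseIdx_nodup (hnd.eraseIdx p) (by omega) hCq'
  have key : ∀ i, i < n →
      (((l'.erase (n + 2)).erase 1).map (· - 1)).getD i 0
        = l'.getD (gfun s t i) 0 - 1 := by
    intro i hi
    have hglt : gfun s t i < n + 2 := gfun_lt ht1 hi
    have hBi : ((l'.eraseIdx p).eraseIdx q')[i]? = l'[gfun s t i]? := by
      simp only [List.getElem?_eraseIdx, gfun]
      rcases hq'spec with ⟨h, h'⟩ | ⟨h, h'⟩ <;> rcases hspq with ⟨e, e'⟩ | ⟨e, e'⟩ <;>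
        split_ifs <;> first
          | rfl
          | (congr 1; omega)
    rw [List.getD_eq_getElem?_getD, e1, e2, List.getElem?_map, hBi]
    simp [List.getElem?_eq_getElem (show gfun s t i < l'.length by omega),
      List.getD_eq_getElem l' 0 (show gfun s t i < l'.length by omega)]
  have hG2 : ∀ x, x < n → 2 ≤ l'.getD (gfun s t x) 0 ∧ l'.getD (gfun s t x) 0 ≤ n + 1 := by
    intro x hx
    have hglt : gfun s t x < n + 2 := gfun_lt ht1 hx
    have hnes := gfun_ne hst x
    have hbd := hEb _ hglt
    have hnp : gfun s t x ≠ p := by rcases hspq with ⟨e, e'⟩ | ⟨e, e'⟩ <;> omega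
    have hnq : gfun s t x ≠ q := by rcases hspq with ⟨e, e'⟩ | ⟨e, e'⟩ <;> omega
    constructor
    · rcases Nat.lt_or_ge (l'.getD (gfun s t x) 0) 2 with h | h
      · exfalso
        have hh : l'.getD (gfun s t x) 0 = l'.getD q 0 := by omega
        exact hnq (hEinj _ _ hglt hq_lt hh)
      · exact h
    · rcases Nat.lt_or_ge (l'.getD (gfun s t x) 0) (n + 2) with h | h
      · omega
      · exfalso
        have hh : l'.getD (gfun s t x) 0 = l'.getD p 0 := by omega
        exact hnp (hEinj _ _ hglt hp_lt hh)
  -- permutation word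
  have hrange : List.range' 1 (n + 2) = 1 :: (List.range' 2 n ++ [n + 2]) := by
    rw [show n + 2 = (n + 1) + 1 from rfl, List.range'_succ, List.range'_concat]
    norm_num
    omega
  have hpermR : (List.range' 1 (n + 2)).Perm ((n + 2) :: 1 :: List.range' 2 n) := by
    rw [hrange]
    exact (List.Perm.cons 1 (List.perm_append_singleton _ _)).trans
      (List.Perm.swap (n + 2) 1 _)
  have hpermM : ((l'.erase (n + 2)).erase 1).Perm (List.range' 2 n) := by
    have h1 := (hperm.trans hpermR).erase (n + 2)
    rw [List.erase_cons_head] at h1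
    have h2 := h1.erase 1
    rw [List.erase_cons_head] at h2
    exact h2
  have hmap2 : (List.range' 2 n).map (· - 1) = List.range' 1 n := by
    have h1 : List.range' 2 n = (List.range' 1 n).map (fun x => 1 + x) := by
      rw [List.map_add_range']
    rw [h1, List.map_map]
    have h2 : ((fun x => x - 1) ∘ fun x => 1 + x) = id := by
      funext x; simp
    rw [h2, List.map_id]
  have hpermFinal : IsPermWord n (((l'.erase (n + 2)).erase 1).map (· - 1)) := by
    unfold IsPermWord
    rw [← hmap2]
    exact hpermM.map _
  -- half fixed
  have hhalf : HalfFixed n (((l'.erase (n + 2)).erase 1).map (· - 1)) := by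
    intro i h1 h2
    have e1' : entry (((l'.erase (n + 2)).erase 1).map (· - 1)) (n + 1 - i)
        = l'.getD (gfun s t (n - 1 - (i - 1))) 0 - 1 := by
      have hh : n + 1 - i - 1 = n - 1 - (i - 1) := by omega
      unfold entry
      rw [hh]
      exact key _ (by omega)
    have e2' : entry (((l'.erase (n + 2)).erase 1).map (· - 1)) i
        = l'.getD (gfun s t (i - 1)) 0 - 1 := by
      unfold entry
      exact key _ (by omega)
    rw [e1', e2', gfun_sym hst hsum (show i - 1 < n by omega)]
    have hglt : gfun s t (i - 1) < n + 2 := gfun_lt ht1 (by omega)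
    have hs2 := hf' (gfun s t (i - 1)) hglt
    have hbd := hG2 (i - 1) (by omega)
    omega
  -- pattern 1
  have hbax1 : ¬ ∃ i j k, 1 ≤ i ∧ i < j ∧ j + 1 < k ∧ k ≤ n ∧
      entry (((l'.erase (n + 2)).erase 1).map (· - 1)) j
        < entry (((l'.erase (n + 2)).erase 1).map (· - 1)) k ∧
      entry (((l'.erase (n + 2)).erase 1).map (· - 1)) k
        < entry (((l'.erase (n + 2)).erase 1).map (· - 1)) i ∧
      entry (((l'.erase (n + 2)).erase 1).map (· - 1)) i
        < entry (((l'.erase (n + 2)).erase 1).map (· - 1)) (j + 1) := by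
    rintro ⟨i, j, k, hi1, hij, hjk, hkn, c1, c2, c3⟩
    obtain ⟨i0, rfl⟩ : ∃ m0, i = m0 + 1 := ⟨i - 1, by omega⟩
    obtain ⟨j0, rfl⟩ : ∃ m0, j = m0 + 1 := ⟨j - 1, by omega⟩
    obtain ⟨k0, rfl⟩ : ∃ m0, k = m0 + 1 := ⟨k - 1, by omega⟩
    have em : ∀ x, entry (((l'.erase (n + 2)).erase 1).map (· - 1)) (x + 1)
        = (((l'.erase (n + 2)).erase 1).map (· - 1)).getD x 0 := fun _ => rfl
    simp only [em] at c1 c2 c3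
    rw [key j0 (by omega), key k0 (by omega)] at c1
    rw [key k0 (by omega), key i0 (by omega)] at c2
    rw [key i0 (by omega), key (j0 + 1) (by omega)] at c3
    have hbi := hG2 i0 (by omega)
    have hbj := hG2 j0 (by omega)
    have hbj1 := hG2 (j0 + 1) (by omega)
    have hbk := hG2 k0 (by omega)
    have d1 : l'.getD (gfun s t j0) 0 < l'.getD (gfun s t k0) 0 := by omega
    have d2 : l'.getD (gfun s t k0) 0 < l'.getD (gfun s t i0) 0 := by omega
    have d3 : l'.getD (gfun s t i0) 0 < l'.getD (gfun s t (j0 + 1)) 0 := by omega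
    have hik : gfun s t i0 < gfun s t j0 := gfun_mono (by omega)
    have hjj : gfun s t j0 < gfun s t (j0 + 1) := gfun_mono (by omega)
    have hkgt : gfun s t (j0 + 1) < gfun s t k0 := gfun_mono (by omega)
    have hstep := gfun_step (s := s) (t := t) j0
    have hklt : gfun s t k0 < n + 2 := gfun_lt ht1 (by omega)
    have ent : ∀ y, entry l' (y + 1) = l'.getD y 0 := fun _ => rfl
    rcases (by omega : gfun s t (j0 + 1) = gfun s t j0 + 1 ∨
        gfun s t (j0 + 1) = gfun s t j0 + 2 ∨
        gfun s t (j0 + 1) = gfun s t j0 + 3) with h1 | h2 | h3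
    · apply hpat1
      refine ⟨gfun s t i0 + 1, gfun s t j0 + 1, gfun s t k0 + 1, by omega, by omega,
        by omega, by omega, ?_, ?_, ?_⟩
      · rw [ent, ent]; exact d1
      · rw [ent, ent]; exact d2
      · rw [ent, ent, show gfun s t j0 + 1 = gfun s t (j0 + 1) from h1.symm]; exact d3
    · have hr := gfun_gap hst (show gfun s t j0 < gfun s t j0 + 1 by omega)
        (show gfun s t j0 + 1 < gfun s t (j0 + 1) by omega)
      have hrpq : gfun s t j0 + 1 = p ∨ gfun s t j0 + 1 = q := by
        rcases hspq with ⟨e, e'⟩ | ⟨e, e'⟩ <;> omega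
      rcases hrpq with hrp | hrq
      · have hvp : l'.getD (gfun s t j0 + 1) 0 = n + 2 := by rw [hrp]; exact hEp
        apply hpat1
        refine ⟨gfun s t i0 + 1, gfun s t j0 + 1, gfun s t k0 + 1, by omega, by omega,
          by omega, by omega, ?_, ?_, ?_⟩
        · rw [ent, ent]; exact d1
        · rw [ent, ent]; exact d2
        · rw [ent, ent, hvp]; omega
      · have hvq : l'.getD (gfun s t j0 + 1) 0 = 1 := by rw [hrq]; exact hEq
        apply hpat1
        refine ⟨gfun s t i0 + 1, gfun s t j0 + 1 + 1, gfun s t k0 + 1, by omega, by omega,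
          by omega, by omega, ?_, ?_, ?_⟩
        · rw [ent, ent, hvq]; omega
        · rw [ent, ent]; exact d2
        · rw [ent, ent, show gfun s t j0 + 1 + 1 = gfun s t (j0 + 1) by omega]; exact d3
    · have hr1 := gfun_gap hst (show gfun s t j0 < gfun s t j0 + 1 by omega)
        (show gfun s t j0 + 1 < gfun s t (j0 + 1) by omega)
      have hr2 := gfun_gap hst (show gfun s t j0 < gfun s t j0 + 2 by omega)
        (show gfun s t j0 + 2 < gfun s t (j0 + 1) by omega)
      have hcase : (gfun s t j0 + 1 = p ∧ gfun s t j0 + 2 = q) ∨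
          (gfun s t j0 + 1 = q ∧ gfun s t j0 + 2 = p) := by
        rcases hspq with ⟨e, e'⟩ | ⟨e, e'⟩ <;> omega
      rcases hcase with ⟨ha, hb2⟩ | ⟨ha, hb2⟩
      · have hv2 : l'.getD (gfun s t j0 + 2) 0 = 1 := by rw [hb2]; exact hEq
        apply hpat1
        refine ⟨gfun s t i0 + 1, gfun s t j0 + 2 + 1, gfun s t k0 + 1, by omega, by omega,
          by omega, by omega, ?_, ?_, ?_⟩
        · rw [ent, ent, hv2]; omega
        · rw [ent, ent]; exact d2
        · rw [ent, ent, show gfun s t j0 + 2 + 1 = gfun s t (j0 + 1) by omega]; exact d3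
      · have hv1 : l'.getD (gfun s t j0 + 1) 0 = 1 := by rw [ha]; exact hEq
        have hv2 : l'.getD (gfun s t j0 + 2) 0 = n + 2 := by rw [hb2]; exact hEp
        apply hpat1
        refine ⟨gfun s t i0 + 1, gfun s t j0 + 1 + 1, gfun s t k0 + 1, by omega, by omega,
          by omega, by omega, ?_, ?_, ?_⟩
        · rw [ent, ent, hv1]; omega
        · rw [ent, ent]; exact d2
        · rw [ent, ent, show gfun s t j0 + 1 + 1 = gfun s t j0 + 2 by omega, hv2]; omega
  -- pattern 2
  have hbax2 : ¬ ∃ i j k, 1 ≤ i ∧ i < j ∧ j + 1 < k ∧ k ≤ n ∧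
      entry (((l'.erase (n + 2)).erase 1).map (· - 1)) (j + 1)
        < entry (((l'.erase (n + 2)).erase 1).map (· - 1)) i ∧
      entry (((l'.erase (n + 2)).erase 1).map (· - 1)) i
        < entry (((l'.erase (n + 2)).erase 1).map (· - 1)) k ∧
      entry (((l'.erase (n + 2)).erase 1).map (· - 1)) k
        < entry (((l'.erase (n + 2)).erase 1).map (· - 1)) j := by
    rintro ⟨i, j, k, hi1, hij, hjk, hkn, c1, c2, c3⟩
    obtain ⟨i0, rfl⟩ : ∃ m0, i = m0 + 1 := ⟨i - 1, by omega⟩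
    obtain ⟨j0, rfl⟩ : ∃ m0, j = m0 + 1 := ⟨j - 1, by omega⟩
    obtain ⟨k0, rfl⟩ : ∃ m0, k = m0 + 1 := ⟨k - 1, by omega⟩
    have em : ∀ x, entry (((l'.erase (n + 2)).erase 1).map (· - 1)) (x + 1)
        = (((l'.erase (n + 2)).erase 1).map (· - 1)).getD x 0 := fun _ => rfl
    simp only [em] at c1 c2 c3
    rw [key (j0 + 1) (by omega), key i0 (by omega)] at c1
    rw [key i0 (by omega), key k0 (by omega)] at c2
    rw [key k0 (by omega), key j0 (by omega)] at c3
    have hbi := hG2 i0 (by omega)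
    have hbj := hG2 j0 (by omega)
    have hbj1 := hG2 (j0 + 1) (by omega)
    have hbk := hG2 k0 (by omega)
    have d1 : l'.getD (gfun s t (j0 + 1)) 0 < l'.getD (gfun s t i0) 0 := by omega
    have d2 : l'.getD (gfun s t i0) 0 < l'.getD (gfun s t k0) 0 := by omega
    have d3 : l'.getD (gfun s t k0) 0 < l'.getD (gfun s t j0) 0 := by omega
    have hik : gfun s t i0 < gfun s t j0 := gfun_mono (by omega)
    have hjj : gfun s t j0 < gfun s t (j0 + 1) := gfun_mono (by omega)
    have hkgt : gfun s t (j0 + 1) < gfun s t k0 := gfun_mono (by omega)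
    have hstep := gfun_step (s := s) (t := t) j0
    have hklt : gfun s t k0 < n + 2 := gfun_lt ht1 (by omega)
    have ent : ∀ y, entry l' (y + 1) = l'.getD y 0 := fun _ => rfl
    rcases (by omega : gfun s t (j0 + 1) = gfun s t j0 + 1 ∨
        gfun s t (j0 + 1) = gfun s t j0 + 2 ∨
        gfun s t (j0 + 1) = gfun s t j0 + 3) with h1 | h2 | h3
    · apply hpat2
      refine ⟨gfun s t i0 + 1, gfun s t j0 + 1, gfun s t k0 + 1, by omega, by omega,
        by omega, by omega, ?_, ?_, ?_⟩
      · rw [ent, ent, show gfun s t j0 + 1 = gfun s t (j0 + 1) from h1.symm]; exact d1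
      · rw [ent, ent]; exact d2
      · rw [ent, ent]; exact d3
    · have hr := gfun_gap hst (show gfun s t j0 < gfun s t j0 + 1 by omega)
        (show gfun s t j0 + 1 < gfun s t (j0 + 1) by omega)
      have hrpq : gfun s t j0 + 1 = p ∨ gfun s t j0 + 1 = q := by
        rcases hspq with ⟨e, e'⟩ | ⟨e, e'⟩ <;> omega
      rcases hrpq with hrp | hrq
      · have hvp : l'.getD (gfun s t j0 + 1) 0 = n + 2 := by rw [hrp]; exact hEp
        apply hpat2
        refine ⟨gfun s t i0 + 1, gfun s t j0 + 1 + 1, gfun s t k0 + 1, by omega, by omega,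
          by omega, by omega, ?_, ?_, ?_⟩
        · rw [ent, ent, show gfun s t j0 + 1 + 1 = gfun s t (j0 + 1) by omega]; exact d1
        · rw [ent, ent]; exact d2
        · rw [ent, ent, hvp]; omega
      · have hvq : l'.getD (gfun s t j0 + 1) 0 = 1 := by rw [hrq]; exact hEq
        apply hpat2
        refine ⟨gfun s t i0 + 1, gfun s t j0 + 1, gfun s t k0 + 1, by omega, by omega,
          by omega, by omega, ?_, ?_, ?_⟩
        · rw [ent, ent, hvq]; omega
        · rw [ent, ent]; exact d2
        · rw [ent, ent]; exact d3
    · have hr1 := gfun_gap hst (show gfun s t j0 < gfun s t j0 + 1 by omega)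
        (show gfun s t j0 + 1 < gfun s t (j0 + 1) by omega)
      have hr2 := gfun_gap hst (show gfun s t j0 < gfun s t j0 + 2 by omega)
        (show gfun s t j0 + 2 < gfun s t (j0 + 1) by omega)
      have hcase : (gfun s t j0 + 1 = p ∧ gfun s t j0 + 2 = q) ∨
          (gfun s t j0 + 1 = q ∧ gfun s t j0 + 2 = p) := by
        rcases hspq with ⟨e, e'⟩ | ⟨e, e'⟩ <;> omega
      rcases hcase with ⟨ha, hb2⟩ | ⟨ha, hb2⟩
      · have hv1 : l'.getD (gfun s t j0 + 1) 0 = n + 2 := by rw [ha]; exact hEp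
        have hv2 : l'.getD (gfun s t j0 + 2) 0 = 1 := by rw [hb2]; exact hEq
        apply hpat2
        refine ⟨gfun s t i0 + 1, gfun s t j0 + 1 + 1, gfun s t k0 + 1, by omega, by omega,
          by omega, by omega, ?_, ?_, ?_⟩
        · rw [ent, ent, show gfun s t j0 + 1 + 1 = gfun s t j0 + 2 by omega, hv2]; omega
        · rw [ent, ent]; exact d2
        · rw [ent, ent, hv1]; omega
      · have hv1 : l'.getD (gfun s t j0 + 1) 0 = 1 := by rw [ha]; exact hEq
        apply hpat2
        refine ⟨gfun s t i0 + 1, gfun s t j0 + 1, gfun s t k0 + 1, by omega, by omega,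
          by omega, by omega, ?_, ?_, ?_⟩
        · rw [ent, ent, hv1]; omega
        · rw [ent, ent]; exact d2
        · rw [ent, ent]; exact d3
  exact ⟨⟨hpermFinal, hbax1, hbax2⟩, hhalf⟩
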